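/- (Flux interpolation error.) Assume in addition that f is differentiable with f' Lipschitz with constant [f']_Lip. Let (x^i)_{i=1}^N, (v^i)_{i=1}^{N−1} be a solution of the particle system on (0, t'), and set Δx₀* := max_{1 ≤ i ≤ N−1} (x₀^{i+1} − x₀^i). Then for every t ∈ (0, t'): ∫_ℝ |A(x, t) v(x, t) − f(v(x, t))| dx ≤ [f']_Lip · v₀* · Δx₀* · Σ_{i=0}^{N−1} |v₀^{i+1} − v₀^i|. -/

import Mathlib

open MeasureTheory Set Filter
open scoped ENNReal NNReal

/-- The velocity field `a(v) = f(v)/v`, extended by `a(0) = f'(0)`. -/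
noncomputable def aF (f : ℝ → ℝ) (v : ℝ) : ℝ :=
  if v = 0 then deriv f 0 else f v / v

/-- The particle velocity `V(v_l, v_r)`: the minimum of `a` over `[v_l, v_r]` if
`v_l ≤ v_r`, and the maximum of `a` over `[v_r, v_l]` if `v_r ≤ v_l`. -/
noncomputable def pV (f : ℝ → ℝ) (vl vr : ℝ) : ℝ :=
  if vl ≤ vr then sInf (aF f '' Set.Icc vl vr) else sSup (aF f '' Set.Icc vr vl)

/-- A solution of the particle system `ẋ^i = V(v^{i-1}, v^i)`,
`v^i_t = v₀^i Δx₀^i / Δx^i_t` on the time interval `[0, t')`, with the conventions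
`v⁰ ≡ 0`, `v^N ≡ 0`. -/
structure IsParticleSol (f : ℝ → ℝ) (N : ℕ) (x₀ v₀ : ℕ → ℝ) (t' : ℝ)
    (x v : ℕ → ℝ → ℝ) : Prop where
  init : ∀ i, 1 ≤ i → i ≤ N → x i 0 = x₀ i
  cont : ∀ i, 1 ≤ i → i ≤ N → ContinuousOn (x i) (Set.Ico 0 t')
  order : ∀ t ∈ Set.Ioo (0:ℝ) t', ∀ i, 1 ≤ i → i < N → x i t < x (i+1) t
  vzero : ∀ t, v 0 t = 0
  vN : ∀ t, v N t = 0
  ode : ∀ i, 1 ≤ i → i ≤ N → ∀ t ∈ Set.Ioo (0:ℝ) t',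
    HasDerivAt (x i) (pV f (v (i-1) t) (v i t)) t
  mass : ∀ i, 1 ≤ i → i < N → ∀ t ∈ Set.Ico (0:ℝ) t',
    v i t = v₀ i * (x₀ (i+1) - x₀ i) / (x (i+1) t - x i t)

/-- `v₀* = max_{1 ≤ i ≤ N-1} v₀^i`. -/
noncomputable def vstar (N : ℕ) (v₀ : ℕ → ℝ) : ℝ :=
  sSup {r | ∃ i, 1 ≤ i ∧ i ≤ N - 1 ∧ r = v₀ i}

/-- `a_min = min_{v ∈ [0, v₀*]} a(v)`. -/
noncomputable def aMin (f : ℝ → ℝ) (N : ℕ) (v₀ : ℕ → ℝ) : ℝ :=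
  sInf (aF f '' Set.Icc 0 (vstar N v₀))

/-- `a_max = max_{v ∈ [0, v₀*]} a(v)`. -/
noncomputable def aMax (f : ℝ → ℝ) (N : ℕ) (v₀ : ℕ → ℝ) : ℝ :=
  sSup (aF f '' Set.Icc 0 (vstar N v₀))

/-- `Δx₀* = max_{1 ≤ i ≤ N-1} (x₀^{i+1} - x₀^i)`. -/
noncomputable def maxGap (N : ℕ) (x₀ : ℕ → ℝ) : ℝ :=
  sSup {r | ∃ i, 1 ≤ i ∧ i ≤ N - 1 ∧ r = x₀ (i+1) - x₀ i}


open Topology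

section AuxLemmas
variable {f : ℝ → ℝ} {L' : ℝ≥0}

lemma taylor_bound (hfdiff : Differentiable ℝ f) (hL' : LipschitzWith L' (deriv f))
    (x y : ℝ) : |f y - f x - deriv f x * (y - x)| ≤ L' * (y - x)^2 := by
  set g : ℝ → ℝ := fun z => f z - deriv f x * z with hg
  have h1 : ∀ z ∈ uIcc x y, HasDerivWithinAt g (deriv f z - deriv f x) (uIcc x y) z := by
    intro z hz
    have : HasDerivAt g (deriv f z - deriv f x) z := by
      exact ((hfdiff z).hasDerivAt.sub ((hasDerivAt_id z).const_mul (deriv f x))).congr_deriv (by simp)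
    exact this.hasDerivWithinAt
  have bound : ∀ z ∈ uIcc x y, ‖deriv f z - deriv f x‖ ≤ (L' : ℝ) * |y - x| := by
    intro z hz
    have h2 : dist (deriv f z) (deriv f x) ≤ L' * dist z x := hL'.dist_le_mul z x
    have h3 : dist z x ≤ dist x y := Real.dist_le_of_mem_uIcc hz left_mem_uIcc
    have h4 : dist x y = |y - x| := by rw [dist_comm, Real.dist_eq]
    rw [Real.norm_eq_abs, ← Real.dist_eq]
    calc dist (deriv f z) (deriv f x) ≤ L' * dist z x := h2
    _ ≤ L' * dist x y := by gcongr
    _ = L' * |y - x| := by rw [h4]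
  have := Convex.norm_image_sub_le_of_norm_hasDerivWithin_le h1 bound (convex_uIcc x y)
      left_mem_uIcc right_mem_uIcc
  have e : g y - g x = f y - f x - deriv f x * (y - x) := by simp [hg]; ring
  rw [e] at this
  calc |f y - f x - deriv f x * (y - x)| ≤ (L' : ℝ) * |y - x| * ‖y - x‖ := this
  _ = L' * (y - x)^2 := by rw [Real.norm_eq_abs, mul_assoc, ← abs_mul, ← sq, abs_sq]

lemma aF_sub_deriv (hfdiff : Differentiable ℝ f) (hL' : LipschitzWith L' (deriv f))
    (hf0 : f 0 = 0) {u : ℝ} (hu : 0 < u) : |aF f u - deriv f u| ≤ L' * u := by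
  have h := taylor_bound hfdiff hL' u 0
  have e : f 0 - f u - deriv f u * (0 - u) = -(f u - deriv f u * u) := by rw [hf0]; ring
  rw [e, abs_neg] at h
  have hne : u ≠ 0 := ne_of_gt hu
  have e2 : aF f u - deriv f u = (f u - deriv f u * u) / u := by
    simp [aF, hne]; field_simp
  rw [e2, abs_div, abs_of_pos hu, div_le_iff₀ hu]
  calc |f u - deriv f u * u| ≤ L' * (0 - u)^2 := h
  _ = L' * u * u := by ring

lemma aF_zero (hf0 : f 0 = 0) : aF f 0 = deriv f 0 := by simp [aF]

lemma aF_near_zero (hfdiff : Differentiable ℝ f) (hL' : LipschitzWith L' (deriv f))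
    (hf0 : f 0 = 0) {u : ℝ} (hu : 0 < u) : |aF f u - deriv f 0| ≤ L' * u := by
  have h := taylor_bound hfdiff hL' 0 u
  rw [hf0] at h
  have hne : u ≠ 0 := ne_of_gt hu
  have e2 : aF f u - deriv f 0 = (f u - 0 - deriv f 0 * (u - 0)) / u := by
    simp [aF, hne]; field_simp
  rw [e2, abs_div, abs_of_pos hu, div_le_iff₀ hu]
  calc |f u - 0 - deriv f 0 * (u - 0)| ≤ L' * (u - 0)^2 := h
  _ = L' * u * u := by ring

lemma aF_lip (hfdiff : Differentiable ℝ f) (hL' : LipschitzWith L' (deriv f))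
    (hf0 : f 0 = 0) {u w : ℝ} (hw : 0 ≤ w) (hwu : w ≤ u) :
    |aF f u - aF f w| ≤ L' * (u - w) := by
  rcases eq_or_lt_of_le hwu with rfl | hlt
  · simp
  rcases eq_or_lt_of_le hw with rfl | hwpos
  · rw [aF_zero hf0]
    have := aF_near_zero hfdiff hL' hf0 hlt
    simpa using this
  · have hu : (0:ℝ) < u := lt_trans hwpos hlt
    have hune : u ≠ 0 := ne_of_gt hu
    have hwne : w ≠ 0 := ne_of_gt hwpos
    set R := f u - f w - deriv f w * (u - w) with hR
    have hRb : |R| ≤ L' * (u - w)^2 := taylor_bound hfdiff hL' w u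
    have hdb : |deriv f w - aF f w| ≤ L' * w := by
      have := aF_sub_deriv hfdiff hL' hf0 hwpos
      rwa [abs_sub_comm]
    have key : aF f u - aF f w = ((u - w)/u) * (deriv f w - aF f w) + R / u := by
      simp only [aF, hune, hwne, if_false, hR]
      field_simp
      ring
    rw [key]
    have e3 : |((u - w)/u) * (deriv f w - aF f w)| = ((u - w)/u) * |deriv f w - aF f w| := by
      rw [abs_mul, abs_of_pos (div_pos (by linarith) hu)]
    have e4 : |R / u| = |R| / u := by rw [abs_div, abs_of_pos hu]
    have hq : (0:ℝ) ≤ (u - w)/u := le_of_lt (div_pos (by linarith) hu)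
    calc |((u - w)/u) * (deriv f w - aF f w) + R / u|
        ≤ |((u - w)/u) * (deriv f w - aF f w)| + |R / u| := abs_add_le _ _
    _ = ((u - w)/u) * |deriv f w - aF f w| + |R| / u := by rw [e3, e4]
    _ ≤ ((u - w)/u) * (L' * w) + (L' * (u - w)^2) / u := by gcongr
    _ = L' * (u - w) := by field_simp; ring

lemma aF_lip' (hfdiff : Differentiable ℝ f) (hL' : LipschitzWith L' (deriv f))
    (hf0 : f 0 = 0) {u w : ℝ} (hu : 0 ≤ u) (hw : 0 ≤ w) :
    |aF f u - aF f w| ≤ L' * |u - w| := by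
  rcases le_total w u with h | h
  · rw [show |u - w| = u - w from abs_of_nonneg (by linarith)]
    exact aF_lip hfdiff hL' hf0 hw h
  · rw [show |u - w| = w - u by rw [abs_sub_comm]; exact abs_of_nonneg (by linarith),
      abs_sub_comm]
    exact aF_lip hfdiff hL' hf0 hu h

lemma aF_contOn (hfdiff : Differentiable ℝ f) (hL' : LipschitzWith L' (deriv f))
    (hf0 : f 0 = 0) : ContinuousOn (aF f) (Ici 0) := by
  have : LipschitzOnWith L' (aF f) (Ici 0) := by
    rw [lipschitzOnWith_iff_dist_le_mul]
    intro a ha b hb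
    rw [Real.dist_eq, Real.dist_eq]
    exact aF_lip' hfdiff hL' hf0 ha hb
  exact this.continuousOn

variable (hfdiff : Differentiable ℝ f) (hL' : LipschitzWith L' (deriv f)) (hf0 : f 0 = 0)
include hfdiff hL' hf0

lemma aF_image_compact {p q : ℝ} (hp : 0 ≤ p) (hpq : p ≤ q) :
    IsCompact (aF f '' Icc p q) :=
  (isCompact_Icc).image_of_continuousOn
    ((aF_contOn hfdiff hL' hf0).mono (fun z hz => le_trans hp hz.1))

lemma pV_mem {vl vr : ℝ} (hl : 0 ≤ vl) (hr : 0 ≤ vr) :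
    ∃ ξ ∈ Icc (min vl vr) (max vl vr), pV f vl vr = aF f ξ := by
  unfold pV
  split_ifs with h
  · have hc := aF_image_compact hfdiff hL' hf0 hl h
    have hne : (aF f '' Icc vl vr).Nonempty := ⟨aF f vl, mem_image_of_mem _ (by simp [h])⟩
    obtain ⟨ξ, hξ, hval⟩ := hc.sInf_mem hne
    exact ⟨ξ, by rwa [min_eq_left h, max_eq_right h], hval.symm⟩
  · push_neg at h
    have h' := le_of_lt h
    have hc := aF_image_compact hfdiff hL' hf0 hr h'
    have hne : (aF f '' Icc vr vl).Nonempty := ⟨aF f vl, mem_image_of_mem _ (by simp [h'])⟩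
    obtain ⟨ξ, hξ, hval⟩ := hc.sSup_mem hne
    exact ⟨ξ, by rwa [min_eq_right h', max_eq_left h'], hval.symm⟩

lemma pV_le_right {vl vr : ℝ} (hl : 0 ≤ vl) (h : vl ≤ vr) :
    pV f vl vr ≤ aF f vr := by
  rw [pV, if_pos h]
  exact csInf_le (aF_image_compact hfdiff hL' hf0 hl h).bddBelow
    (mem_image_of_mem _ (by simp [h]))

lemma pV_le_left {vl vr : ℝ} (hl : 0 ≤ vl) (h : vl ≤ vr) :
    pV f vl vr ≤ aF f vl := by
  rw [pV, if_pos h]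
  exact csInf_le (aF_image_compact hfdiff hL' hf0 hl h).bddBelow
    (mem_image_of_mem _ (by simp [h]))

lemma right_le_pV {vl vr : ℝ} (hr : 0 ≤ vr) (h : vr ≤ vl) :
    aF f vr ≤ pV f vl vr := by
  rw [pV]
  split_ifs with h2
  · have : vl = vr := le_antisymm h2 h
    subst this
    rw [Icc_self, image_singleton, csInf_singleton]
  · exact le_csSup (aF_image_compact hfdiff hL' hf0 hr h).bddAbove
      (mem_image_of_mem _ (by simp [h]))

lemma left_le_pV {vl vr : ℝ} (hr : 0 ≤ vr) (h : vr ≤ vl) :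
    aF f vl ≤ pV f vl vr := by
  rw [pV]
  split_ifs with h2
  · have : vl = vr := le_antisymm h2 h
    subst this
    rw [Icc_self, image_singleton, csInf_singleton]
  · exact le_csSup (aF_image_compact hfdiff hL' hf0 hr h).bddAbove
      (mem_image_of_mem _ (by simp [h]))

end AuxLemmas

lemma abs_hasDerivWithinAt_right {g : ℝ → ℝ} {c x : ℝ} (hg : HasDerivAt g c x) (h0 : g x = 0) :
    HasDerivWithinAt (fun z => |g z|) |c| (Ici x) x := by
  rw [hasDerivWithinAt_iff_tendsto_slope]
  have h1 : Tendsto (slope g x) (𝓝[(Ici x) \ {x}] x) (𝓝 c) :=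
    (hasDerivAt_iff_tendsto_slope.mp hg).mono_left
      (nhdsWithin_mono _ (by intro z hz; exact hz.2))
  have h2 : Tendsto (fun z => |slope g x z|) (𝓝[(Ici x) \ {x}] x) (𝓝 |c|) := h1.abs
  apply h2.congr'
  filter_upwards [self_mem_nhdsWithin] with z hz
  have hzx : x < z := lt_of_le_of_ne hz.1 (fun h => hz.2 h.symm)
  rw [slope_def_field, slope_def_field, h0, abs_zero, sub_zero, sub_zero, abs_div,
    abs_of_pos (by linarith : (0:ℝ) < z - x)]

lemma abs_hasDerivAt_ne {g : ℝ → ℝ} {c x : ℝ} (hg : HasDerivAt g c x) (h0 : g x ≠ 0) :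
    HasDerivAt (fun z => |g z|) ((if 0 < g x then 1 else -1) * c) x := by
  rcases lt_or_gt_of_ne h0 with hneg | hpos
  · rw [if_neg (by linarith)]
    have hev : (fun z => |g z|) =ᶠ[nhds x] (fun z => -g z) := by
      have : ∀ᶠ z in nhds x, g z < 0 := hg.continuousAt.eventually_lt_const hneg
      filter_upwards [this] with z hz
      rw [abs_of_neg hz]
    exact HasDerivAt.congr_of_eventuallyEq (by rw [neg_one_mul]; exact hg.neg) hev
  · rw [if_pos hpos]
    have hev : (fun z => |g z|) =ᶠ[nhds x] g := by
      have : ∀ᶠ z in nhds x, 0 < g z := hg.continuousAt.eventually_const_lt hpos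
      filter_upwards [this] with z hz
      rw [abs_of_pos hz]
    exact HasDerivAt.congr_of_eventuallyEq (by simpa using hg) hev


lemma abel_sum {N : ℕ} (hN : 2 ≤ N) (σ u : ℕ → ℝ) (hu0 : u 0 = 0) (huN : u N = 0) :
    ∑ i ∈ Finset.range N, σ i * (u (i+1) - u i)
      = ∑ j ∈ Finset.range (N-1), (σ j - σ (j+1)) * u (j+1) := by
  obtain ⟨M, rfl⟩ : ∃ M, N = M + 1 := ⟨N - 1, by omega⟩
  simp only [Nat.add_sub_cancel]
  rw [show ∑ i ∈ Finset.range (M+1), σ i * (u (i+1) - u i)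
      = ∑ i ∈ Finset.range (M+1), σ i * u (i+1) - ∑ i ∈ Finset.range (M+1), σ i * u i by
    rw [← Finset.sum_sub_distrib]; congr 1; ext i; ring]
  rw [Finset.sum_range_succ (fun i => σ i * u (i+1)) M, huN, Finset.sum_range_succ'
    (fun i => σ i * u i) M, hu0]
  simp only [mul_zero, add_zero]
  rw [← Finset.sum_sub_distrib]
  congr 1; ext j; ring

lemma tv_pair_bound {N : ℕ} (hN : 2 ≤ N) (d : ℕ → ℝ) (hd : ∀ i, 0 ≤ d i) :
    ∑ i ∈ Finset.Ico 1 N, (d (i-1) + d i) ≤ 2 * ∑ i ∈ Finset.range N, d i := by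
  rw [Finset.sum_add_distrib, two_mul]
  have hA : ∑ i ∈ Finset.Ico 1 N, d (i-1) ≤ ∑ i ∈ Finset.range N, d i := by
    rw [Finset.sum_Ico_eq_sum_range]
    have e : ∀ j, d (1 + j - 1) = d j := fun j => by congr 1; omega
    rw [Finset.sum_congr rfl (fun j _ => e j)]
    exact Finset.sum_le_sum_of_subset_of_nonneg
      (Finset.range_subset_range.mpr (by omega)) (fun i _ _ => hd i)
  have hB : ∑ i ∈ Finset.Ico 1 N, d i ≤ ∑ i ∈ Finset.range N, d i := by
    exact Finset.sum_le_sum_of_subset_of_nonneg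
      (by rw [Finset.range_eq_Ico]; exact Finset.Ico_subset_Ico (by omega) le_rfl)
      (fun i _ _ => hd i)
  linarith

lemma find_gap {N : ℕ} (hN : 2 ≤ N) (ξ : ℕ → ℝ)
    (hmono : ∀ j k, 1 ≤ j → j < k → k ≤ N → ξ j < ξ k) (y : ℝ)
    (h1 : ξ 1 < y) (h2 : y < ξ N) (hne : ∀ i, 1 ≤ i → i ≤ N → y ≠ ξ i) :
    ∃ i, 1 ≤ i ∧ i < N ∧ ξ i < y ∧ y < ξ (i+1) := by
  classical
  set P := (Finset.Icc 1 N).filter (fun j => ξ j < y) with hP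
  have h1P : 1 ∈ P := by simp [hP]; exact ⟨by omega, h1⟩
  have hPne : P.Nonempty := ⟨1, h1P⟩
  set i := P.max' hPne with hi
  have hiP : i ∈ P := P.max'_mem hPne
  simp only [hP, Finset.mem_filter, Finset.mem_Icc] at hiP
  have hiN : i < N := by
    rcases eq_or_lt_of_le hiP.1.2 with h | h
    · exfalso; rw [h] at hiP; exact absurd hiP.2 (by linarith)
    · exact h
  refine ⟨i, hiP.1.1, hiN, hiP.2, ?_⟩
  have hnotP : i + 1 ∉ P := fun hmem => by
    have := P.le_max' (i+1) hmem
    omega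
  simp only [hP, Finset.mem_filter, Finset.mem_Icc] at hnotP
  have : ¬ ξ (i+1) < y := fun hc => hnotP ⟨⟨by omega, by omega⟩, hc⟩
  rcases eq_or_lt_of_le (not_lt.mp this) with h | h
  · exact absurd h (hne (i+1) (by omega) (by omega))
  · exact h


section AuxLemmas2
variable {f : ℝ → ℝ} {L' : ℝ≥0}
variable (hfdiff : Differentiable ℝ f) (hL' : LipschitzWith L' (deriv f)) (hf0 : f 0 = 0)
include hfdiff hL' hf0

/-- The key estimate `|pV(v_l,v_r) − a(v)| ≤ L'·|v − other endpoint|`. -/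
lemma pV_dist (p q : ℝ) (hp : 0 ≤ p) (hq : 0 ≤ q) :
    |pV f p q - aF f q| ≤ L' * |q - p| := by
  obtain ⟨ξ, hξ, hval⟩ := pV_mem hfdiff hL' hf0 hp hq
  rw [hval]
  have hξ0 : 0 ≤ ξ := le_trans (le_min hp hq) hξ.1
  have hd : |ξ - q| ≤ |q - p| := by
    rcases le_total p q with h | h
    · rw [min_eq_left h, max_eq_right h] at hξ
      rw [abs_of_nonpos (by linarith [hξ.2] : ξ - q ≤ 0),
        abs_of_nonneg (by linarith : (0:ℝ) ≤ q - p)]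
      linarith [hξ.1]
    · rw [min_eq_right h, max_eq_left h] at hξ
      rw [abs_of_nonneg (by linarith [hξ.1] : (0:ℝ) ≤ ξ - q),
        abs_of_nonpos (by linarith : q - p ≤ 0)]
      linarith [hξ.2]
  calc |aF f ξ - aF f q| ≤ L' * |ξ - q| := aF_lip' hfdiff hL' hf0 hξ0 hq
  _ ≤ L' * |q - p| := mul_le_mul_of_nonneg_left hd (by positivity)

lemma pV_dist' (p q : ℝ) (hp : 0 ≤ p) (hq : 0 ≤ q) :
    |pV f q p - aF f q| ≤ L' * |p - q| := by
  obtain ⟨ξ, hξ, hval⟩ := pV_mem hfdiff hL' hf0 hq hp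
  rw [hval]
  have hξ0 : 0 ≤ ξ := le_trans (le_min hq hp) hξ.1
  have hd : |ξ - q| ≤ |p - q| := by
    rcases le_total p q with h | h
    · rw [min_eq_right h, max_eq_left h] at hξ
      rw [abs_of_nonpos (by linarith [hξ.2] : ξ - q ≤ 0),
        abs_of_nonpos (by linarith : p - q ≤ 0)]
      linarith [hξ.1]
    · rw [min_eq_left h, max_eq_right h] at hξ
      rw [abs_of_nonneg (by linarith [hξ.1] : (0:ℝ) ≤ ξ - q),
        abs_of_nonneg (by linarith : (0:ℝ) ≤ p - q)]
      linarith [hξ.2]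
  calc |aF f ξ - aF f q| ≤ L' * |ξ - q| := aF_lip' hfdiff hL' hf0 hξ0 hq
  _ ≤ L' * |p - q| := mul_le_mul_of_nonneg_left hd (by positivity)

lemma aF_mul (v : ℝ) : aF f v * v = f v := by
  unfold aF
  split_ifs with h
  · simp [h, hf0]
  · field_simp

lemma interval_flux_bound (a b vl vm vr : ℝ) (hab : a < b)
    (hvl : 0 ≤ vl) (hvm : 0 ≤ vm) (hvr : 0 ≤ vr) :
    ∫ y in a..b, |((b - y) * pV f vl vm + (y - a) * pV f vm vr)/(b - a) * vm - f vm| ≤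
      vm * (b - a) * ((L' : ℝ) * (|vm - vl| + |vr - vm|)) / 2 := by
  set V1 := pV f vl vm
  set V2 := pV f vm vr
  set c1 := (L' : ℝ) * |vm - vl| with hc1
  set c2 := (L' : ℝ) * |vr - vm| with hc2
  have hc1n : 0 ≤ c1 := by positivity
  have hc2n : 0 ≤ c2 := by positivity
  have hV1 : |V1 - aF f vm| ≤ c1 := pV_dist hfdiff hL' hf0 vl vm hvl hvm
  have hV2 : |V2 - aF f vm| ≤ c2 := pV_dist' hfdiff hL' hf0 vr vm hvr hvm
  have hba : (0:ℝ) < b - a := by linarith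
  -- pointwise bound
  have hpt : ∀ y ∈ Icc a b,
      |((b - y) * V1 + (y - a) * V2)/(b - a) * vm - f vm|
        ≤ vm * ((b - y) * c1 + (y - a) * c2) / (b - a) := by
    intro y hy
    have e1 : ((b - y) * V1 + (y - a) * V2)/(b - a) * vm - f vm
        = (((b - y) * (V1 - aF f vm) + (y - a) * (V2 - aF f vm))/(b - a)) * vm := by
      rw [← aF_mul hfdiff hL' hf0 vm]
      field_simp
      ring
    have hX : |(b - y) * (V1 - aF f vm) + (y - a) * (V2 - aF f vm)|
        ≤ (b - y) * c1 + (y - a) * c2 := by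
      calc |(b - y) * (V1 - aF f vm) + (y - a) * (V2 - aF f vm)|
          ≤ |(b - y) * (V1 - aF f vm)| + |(y - a) * (V2 - aF f vm)| := abs_add_le _ _
      _ = (b - y) * |V1 - aF f vm| + (y - a) * |V2 - aF f vm| := by
          rw [abs_mul, abs_mul, abs_of_nonneg (by linarith [hy.2] : (0:ℝ) ≤ b - y),
            abs_of_nonneg (by linarith [hy.1] : (0:ℝ) ≤ y - a)]
      _ ≤ (b - y) * c1 + (y - a) * c2 :=
          add_le_add (mul_le_mul_of_nonneg_left hV1 (by linarith [hy.2]))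
            (mul_le_mul_of_nonneg_left hV2 (by linarith [hy.1]))
    rw [e1, abs_mul, abs_div, abs_of_nonneg hvm, abs_of_pos hba, div_mul_eq_mul_div,
      mul_comm vm ((b - y) * c1 + (y - a) * c2)]
    exact (div_le_div_iff_of_pos_right hba).mpr
      (mul_le_mul_of_nonneg_right hX hvm)
  -- integrability
  have hcont1 : Continuous fun y => |((b - y) * V1 + (y - a) * V2)/(b - a) * vm - f vm| := by
    fun_prop
  have hcont2 : Continuous fun y => vm * ((b - y) * c1 + (y - a) * c2) / (b - a) := by
    fun_prop
  have hint : ∫ y in a..b, |((b - y) * V1 + (y - a) * V2)/(b - a) * vm - f vm|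
      ≤ ∫ y in a..b, vm * ((b - y) * c1 + (y - a) * c2) / (b - a) := by
    apply intervalIntegral.integral_mono_on (le_of_lt hab)
      (hcont1.intervalIntegrable a b) (hcont2.intervalIntegrable a b)
    intro y hy
    exact hpt y hy
  refine le_trans hint (le_of_eq ?_)
  have hbane : b - a ≠ 0 := ne_of_gt hba
  have I1 : (∫ y in a..b, (b - y)) = (b-a)^2/2 := by
    rw [intervalIntegral.integral_comp_sub_left (fun x => x) b, integral_id]
    ring
  have I2 : (∫ y in a..b, (y - a)) = (b-a)^2/2 := by
    rw [intervalIntegral.integral_comp_sub_right (fun x => x) a, integral_id]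
    ring
  have e3 : EqOn (fun y => vm * ((b - y) * c1 + (y - a) * c2) / (b - a))
      (fun y => (vm * c1/(b-a)) * (b - y) + (vm * c2/(b-a)) * (y - a)) (uIcc a b) := by
    intro y _
    field_simp
  rw [intervalIntegral.integral_congr e3, intervalIntegral.integral_add
    (Continuous.intervalIntegrable (by fun_prop) a b)
    (Continuous.intervalIntegrable (by fun_prop) a b),
    intervalIntegral.integral_const_mul, intervalIntegral.integral_const_mul, I1, I2]
  field_simp
  ring

end AuxLemmas2

/-- The formula for the time derivative of `v i`. -/
noncomputable def Uv (f : ℝ → ℝ) (N : ℕ) (x₀ v₀ : ℕ → ℝ) (x v : ℕ → ℝ → ℝ)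
    (i : ℕ) (s : ℝ) : ℝ :=
  if 1 ≤ i ∧ i < N then
    (v₀ i * (x₀ (i+1) - x₀ i)) *
      (-((pV f (v i s) (v (i+1) s) - pV f (v (i-1) s) (v i s)) / (x (i+1) s - x i s)^2))
  else 0

section Sol
variable {f : ℝ → ℝ} {N : ℕ} {x₀ v₀ : ℕ → ℝ} {t' : ℝ} {x v : ℕ → ℝ → ℝ} {L' : ℝ≥0}

variable (hsol : IsParticleSol f N x₀ v₀ t' x v)
include hsol

lemma gap_pos (hx₀ : ∀ i, 1 ≤ i → i < N → x₀ i < x₀ (i+1)) :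
    ∀ i, 1 ≤ i → i < N → ∀ s ∈ Ico 0 t', 0 < x (i+1) s - x i s := by
  intro i h1 h2 s hs
  rcases eq_or_lt_of_le hs.1 with h | h
  · rw [← h, hsol.init i h1 (by omega), hsol.init (i+1) (by omega) (by omega)]
    have := hx₀ i h1 h2; linarith
  · have := hsol.order s ⟨h, hs.2⟩ i h1 h2; linarith

lemma v_eq (hx₀ : ∀ i, 1 ≤ i → i < N → x₀ i < x₀ (i+1)) :
    ∀ i, 1 ≤ i → i < N → ∀ s ∈ Ico 0 t',
      v i s = (v₀ i * (x₀ (i+1) - x₀ i)) / (x (i+1) s - x i s) := by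
  intro i h1 h2 s hs
  exact hsol.mass i h1 h2 s hs

lemma v_nonneg (hx₀ : ∀ i, 1 ≤ i → i < N → x₀ i < x₀ (i+1))
    (hv₀nn : ∀ i, 1 ≤ i → i < N → 0 ≤ v₀ i) :
    ∀ i, i ≤ N → ∀ s ∈ Ico 0 t', 0 ≤ v i s := by
  intro i hiN s hs
  rcases Nat.eq_zero_or_pos i with rfl | h1
  · rw [hsol.vzero]
  rcases eq_or_lt_of_le hiN with rfl | h2
  · rw [hsol.vN]
  rw [v_eq hsol hx₀ i h1 h2 s hs]
  apply div_nonneg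
  · exact mul_nonneg (hv₀nn i h1 h2) (le_of_lt (by linarith [hx₀ i h1 h2]))
  · exact le_of_lt (gap_pos hsol hx₀ i h1 h2 s hs)

lemma v_zero_eq (hx₀ : ∀ i, 1 ≤ i → i < N → x₀ i < x₀ (i+1))
    (hv₀0 : v₀ 0 = 0) (hv₀N : v₀ N = 0) (ht' : 0 < t') :
    ∀ i, i ≤ N → v i 0 = v₀ i := by
  intro i hiN
  rcases Nat.eq_zero_or_pos i with rfl | h1
  · rw [hsol.vzero, hv₀0]
  rcases eq_or_lt_of_le hiN with rfl | h2
  · rw [hsol.vN, hv₀N]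
  rw [v_eq hsol hx₀ i h1 h2 0 ⟨le_refl 0, ht'⟩, hsol.init i h1 (by omega),
    hsol.init (i+1) (by omega) (by omega), mul_div_assoc,
    div_self (ne_of_gt (by linarith [hx₀ i h1 h2] : (0:ℝ) < x₀ (i+1) - x₀ i)), mul_one]

lemma v_contOn (hx₀ : ∀ i, 1 ≤ i → i < N → x₀ i < x₀ (i+1)) :
    ∀ i, i ≤ N → ContinuousOn (v i) (Ico 0 t') := by
  intro i hiN
  rcases Nat.eq_zero_or_pos i with rfl | h1
  · have : v 0 = fun _ => (0:ℝ) := funext hsol.vzero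
    rw [this]; exact continuousOn_const
  rcases eq_or_lt_of_le hiN with rfl | h2
  · have : v i = fun _ => (0:ℝ) := funext hsol.vN
    rw [this]; exact continuousOn_const
  apply ContinuousOn.congr (f := fun s => (v₀ i * (x₀ (i+1) - x₀ i)) / (x (i+1) s - x i s))
  · apply ContinuousOn.div continuousOn_const
      ((hsol.cont (i+1) (by omega) (by omega)).sub (hsol.cont i h1 (by omega)))
    intro s hs
    exact ne_of_gt (gap_pos hsol hx₀ i h1 h2 s hs)
  · intro s hs
    exact v_eq hsol hx₀ i h1 h2 s hs

lemma v_hasDeriv (hx₀ : ∀ i, 1 ≤ i → i < N → x₀ i < x₀ (i+1)) :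
    ∀ i, i ≤ N → ∀ s ∈ Ioo 0 t', HasDerivAt (v i) (Uv f N x₀ v₀ x v i s) s := by
  intro i hiN s hs
  have hsI : s ∈ Ico 0 t' := ⟨le_of_lt hs.1, hs.2⟩
  rcases Nat.eq_zero_or_pos i with rfl | h1
  · have e : v 0 = fun _ => (0:ℝ) := funext hsol.vzero
    rw [e, Uv, if_neg (by omega)]; exact hasDerivAt_const _ 0
  rcases eq_or_lt_of_le hiN with rfl | h2
  · have e : v i = fun _ => (0:ℝ) := funext hsol.vN
    rw [e, Uv, if_neg (by omega)]; exact hasDerivAt_const _ 0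
  have hD : HasDerivAt (fun r => x (i+1) r - x i r)
      (pV f (v i s) (v (i+1) s) - pV f (v (i-1) s) (v i s)) s := by
    have h1' := hsol.ode (i+1) (by omega) (by omega) s hs
    have h2' := hsol.ode i (by omega) (by omega) s hs
    exact h1'.sub h2'
  have hne : x (i+1) s - x i s ≠ 0 := ne_of_gt (gap_pos hsol hx₀ i h1 h2 s hsI)
  have hinv := (hD.inv hne).const_mul (v₀ i * (x₀ (i+1) - x₀ i))
  have hev : (fun r => (v₀ i * (x₀ (i+1) - x₀ i)) * (x (i+1) r - x i r)⁻¹) =ᶠ[𝓝 s] v i := by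
    filter_upwards [isOpen_Ioo.mem_nhds hs] with r hr
    rw [v_eq hsol hx₀ i h1 h2 r ⟨le_of_lt hr.1, hr.2⟩, div_eq_mul_inv]
  have := hinv.congr_of_eventuallyEq hev.symm
  rw [Uv, if_pos ⟨h1, h2⟩]
  rw [← neg_div]
  exact this

lemma Uv_sign_max (hfdiff : Differentiable ℝ f) (hL' : LipschitzWith L' (deriv f))
    (hf0 : f 0 = 0)
    (hx₀ : ∀ i, 1 ≤ i → i < N → x₀ i < x₀ (i+1))
    (hv₀nn : ∀ i, 1 ≤ i → i < N → 0 ≤ v₀ i)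
    {i : ℕ} (h1 : 1 ≤ i) (h2 : i < N) {s : ℝ} (hs : s ∈ Ico 0 t')
    (hl : v (i-1) s ≤ v i s) (hr : v (i+1) s ≤ v i s) :
    Uv f N x₀ v₀ x v i s ≤ 0 := by
  rw [Uv, if_pos ⟨h1, h2⟩]
  have hm : 0 ≤ v₀ i * (x₀ (i+1) - x₀ i) :=
    mul_nonneg (hv₀nn i h1 h2) (le_of_lt (by linarith [hx₀ i h1 h2]))
  have hVle : pV f (v (i-1) s) (v i s) ≤ aF f (v i s) :=
    pV_le_right hfdiff hL' hf0 (v_nonneg hsol hx₀ hv₀nn (i-1) (by omega) s hs) hl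
  have hVge : aF f (v i s) ≤ pV f (v i s) (v (i+1) s) :=
    left_le_pV hfdiff hL' hf0 (v_nonneg hsol hx₀ hv₀nn (i+1) (by omega) s hs) hr
  have hnum : 0 ≤ pV f (v i s) (v (i+1) s) - pV f (v (i-1) s) (v i s) := by linarith
  have : 0 ≤ (pV f (v i s) (v (i+1) s) - pV f (v (i-1) s) (v i s)) / (x (i+1) s - x i s)^2 :=
    div_nonneg hnum (sq_nonneg _)
  nlinarith

lemma Uv_sign_min (hfdiff : Differentiable ℝ f) (hL' : LipschitzWith L' (deriv f))
    (hf0 : f 0 = 0)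
    (hx₀ : ∀ i, 1 ≤ i → i < N → x₀ i < x₀ (i+1))
    (hv₀nn : ∀ i, 1 ≤ i → i < N → 0 ≤ v₀ i)
    {i : ℕ} (h1 : 1 ≤ i) (h2 : i < N) {s : ℝ} (hs : s ∈ Ico 0 t')
    (hl : v i s ≤ v (i-1) s) (hr : v i s ≤ v (i+1) s) :
    0 ≤ Uv f N x₀ v₀ x v i s := by
  rw [Uv, if_pos ⟨h1, h2⟩]
  have hm : 0 ≤ v₀ i * (x₀ (i+1) - x₀ i) :=
    mul_nonneg (hv₀nn i h1 h2) (le_of_lt (by linarith [hx₀ i h1 h2]))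
  have hvin : 0 ≤ v i s := v_nonneg hsol hx₀ hv₀nn i (by omega) s hs
  have hVge : aF f (v i s) ≤ pV f (v (i-1) s) (v i s) :=
    right_le_pV hfdiff hL' hf0 hvin hl
  have hVle : pV f (v i s) (v (i+1) s) ≤ aF f (v i s) :=
    pV_le_left hfdiff hL' hf0 hvin hr
  have hnum : pV f (v i s) (v (i+1) s) - pV f (v (i-1) s) (v i s) ≤ 0 := by linarith
  have : (pV f (v i s) (v (i+1) s) - pV f (v (i-1) s) (v i s)) / (x (i+1) s - x i s)^2 ≤ 0 :=
    div_nonpos_of_nonpos_of_nonneg hnum (sq_nonneg _)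
  nlinarith
end Sol

section TVD
variable {f : ℝ → ℝ} {N : ℕ} {x₀ v₀ : ℕ → ℝ} {t' : ℝ} {x v : ℕ → ℝ → ℝ} {L' : ℝ≥0}

lemma tvd (hsol : IsParticleSol f N x₀ v₀ t' x v)
    (hfdiff : Differentiable ℝ f) (hL' : LipschitzWith L' (deriv f)) (hf0 : f 0 = 0)
    (hN : 2 ≤ N)
    (hx₀ : ∀ i, 1 ≤ i → i < N → x₀ i < x₀ (i+1))
    (hv₀nn : ∀ i, 1 ≤ i → i < N → 0 ≤ v₀ i)
    (hv₀0 : v₀ 0 = 0) (hv₀N : v₀ N = 0) (ht' : 0 < t') :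
    ∀ t ∈ Ioo 0 t', ∑ i ∈ Finset.range N, |v (i+1) t - v i t|
      ≤ ∑ i ∈ Finset.range N, |v₀ (i+1) - v₀ i| := by
  classical
  set φ : ℝ → ℝ := fun s => ∑ i ∈ Finset.range N, |v (i+1) s - v i s| with hφ
  have φcont : ContinuousOn φ (Ico 0 t') := by
    apply continuousOn_finset_sum
    intro i hi
    simp only [Finset.mem_range] at hi
    exact (((v_contOn hsol hx₀ (i+1) (by omega)).sub (v_contOn hsol hx₀ i (by omega)))).abs
  -- right derivative candidate
  set dd : ℕ → ℝ → ℝ := fun i r => Uv f N x₀ v₀ x v (i+1) r - Uv f N x₀ v₀ x v i r with hdd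
  set σ : ℕ → ℝ → ℝ := fun i r =>
    if 0 < v (i+1) r - v i r then 1 else if v (i+1) r - v i r < 0 then -1
      else if 0 ≤ dd i r then 1 else -1 with hσ
  have hσpm : ∀ i r, σ i r = 1 ∨ σ i r = -1 := by
    intro i r; simp only [hσ]; split_ifs <;> simp
  have hσ1 : ∀ i r, σ i r = 1 → ¬ (v (i+1) r - v i r < 0) := by
    intro i r h hc
    simp only [hσ, if_neg (by linarith : ¬ (0:ℝ) < v (i+1) r - v i r), if_pos hc] at h
    norm_num at h
  have hσ2 : ∀ i r, σ i r = -1 → ¬ (0 < v (i+1) r - v i r) := by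
    intro i r h hc
    simp only [hσ, if_pos hc] at h
    norm_num at h
  have step : ∀ s ∈ Ioo (0:ℝ) t', ∀ τ ∈ Ioo (0:ℝ) t', s ≤ τ → φ τ ≤ φ s := by
    intro s hsI τ hτI hsτ
    have hsub : Icc s τ ⊆ Ico 0 t' := fun r hr => ⟨le_trans (le_of_lt hsI.1) hr.1,
      lt_of_le_of_lt hr.2 hτI.2⟩
    have key := image_le_of_deriv_right_le_deriv_boundary (f := φ)
      (f' := fun r => ∑ i ∈ Finset.range N, σ i r * dd i r)
      (a := s) (b := τ) (B := fun _ => φ s) (B' := fun _ => 0)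
      (φcont.mono hsub) ?_ (le_refl _) continuousOn_const
      (fun r _ => hasDerivWithinAt_const r _ (φ s)) ?_
    · exact key (right_mem_Icc.mpr hsτ)
    · -- right derivative
      intro r hr
      have hrI : r ∈ Ioo 0 t' := ⟨lt_of_lt_of_le hsI.1 hr.1, lt_trans hr.2 hτI.2⟩
      apply HasDerivWithinAt.fun_sum
      intro i hi
      simp only [Finset.mem_range] at hi
      have hΔ : HasDerivAt (fun z => v (i+1) z - v i z) (dd i r) r :=
        (v_hasDeriv hsol hx₀ (i+1) (by omega) r hrI).sub
          (v_hasDeriv hsol hx₀ i (by omega) r hrI)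
      rcases lt_trichotomy (v (i+1) r - v i r) 0 with hc | hc | hc
      · have := abs_hasDerivAt_ne hΔ (ne_of_lt hc)
        rw [if_neg (by linarith)] at this
        have e : σ i r = -1 := by
          simp only [hσ, if_neg (by linarith : ¬ (0:ℝ) < v (i+1) r - v i r), if_pos hc]
        rw [e]
        exact this.hasDerivWithinAt
      · have := abs_hasDerivWithinAt_right hΔ hc
        have e : σ i r * dd i r = |dd i r| := by
          simp only [hσ, if_neg (by rw [hc]; norm_num : ¬ (0:ℝ) < v (i+1) r - v i r),
            if_neg (by rw [hc]; norm_num : ¬ v (i+1) r - v i r < 0)]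
          split_ifs with h
          · rw [one_mul, abs_of_nonneg h]
          · rw [neg_one_mul, abs_of_neg (by linarith)]
        rw [e]
        exact this
      · have := abs_hasDerivAt_ne hΔ (ne_of_gt hc)
        rw [if_pos hc] at this
        have e : σ i r = 1 := by simp only [hσ, if_pos hc]
        rw [e]
        exact this.hasDerivWithinAt
    · -- bound : sum ≤ 0
      intro r hr
      have hrI : r ∈ Ico 0 t' := ⟨le_trans (le_of_lt hsI.1) hr.1, lt_trans hr.2 hτI.2⟩
      show (∑ i ∈ Finset.range N, σ i r * dd i r) ≤ 0
      have hu0 : Uv f N x₀ v₀ x v 0 r = 0 := by rw [Uv, if_neg (by omega)]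
      have huN : Uv f N x₀ v₀ x v N r = 0 := by rw [Uv, if_neg (by omega)]
      rw [show (∑ i ∈ Finset.range N, σ i r * dd i r)
          = ∑ j ∈ Finset.range (N-1), (σ j r - σ (j+1) r) * Uv f N x₀ v₀ x v (j+1) r from
        abel_sum hN (fun i => σ i r) (fun i => Uv f N x₀ v₀ x v i r) hu0 huN]
      apply Finset.sum_nonpos
      intro j hj
      simp only [Finset.mem_range] at hj
      have h1j : 1 ≤ j + 1 := by omega
      have h2j : j + 1 < N := by omega
      rcases hσpm j r with e1 | e1 <;> rcases hσpm (j+1) r with e2 | e2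
      · rw [e1, e2]; simp
      · -- local max at j+1
        rw [e1, e2]
        have hl : v j r ≤ v (j+1) r := by
          have := hσ1 j r e1; push_neg at this
          have e : (j+1) - 1 = j := by omega
          linarith
        have hr2 : v (j+2) r ≤ v (j+1) r := by
          have := hσ2 (j+1) r e2; push_neg at this; linarith
        have hU := Uv_sign_max hsol hfdiff hL' hf0 hx₀ hv₀nn h1j h2j hrI
          (by simpa using hl) (by simpa using hr2)
        linarith [hU]
      · -- local min at j+1
        rw [e1, e2]
        have hl : v (j+1) r ≤ v j r := by
          have := hσ2 j r e1; push_neg at this; linarith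
        have hr2 : v (j+1) r ≤ v (j+2) r := by
          have := hσ1 (j+1) r e2; push_neg at this; linarith
        have hU := Uv_sign_min hsol hfdiff hL' hf0 hx₀ hv₀nn h1j h2j hrI
          (by simpa using hl) (by simpa using hr2)
        linarith [hU]
      · rw [e1, e2]; simp
  -- limit s → 0
  intro t ht
  have h0mem : (0:ℝ) ∈ closure (Ioo 0 t') := by
    rw [closure_Ioo (ne_of_lt ht')]; exact ⟨le_refl 0, le_of_lt ht'⟩
  have hneb : (𝓝[Ioo (0:ℝ) t'] 0).NeBot := mem_closure_iff_nhdsWithin_neBot.mp h0mem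
  have htend : Tendsto φ (𝓝[Ioo (0:ℝ) t'] 0) (𝓝 (φ 0)) :=
    ((φcont 0 ⟨le_refl 0, ht'⟩).tendsto).mono_left
      (nhdsWithin_mono 0 Ioo_subset_Ico_self)
  have hev : ∀ᶠ r in 𝓝[Ioo (0:ℝ) t'] 0, φ t ≤ φ r := by
    have h1 : ∀ᶠ r in 𝓝[Ioo (0:ℝ) t'] 0, r < t :=
      Filter.Eventually.filter_mono nhdsWithin_le_nhds (Iio_mem_nhds ht.1)
    filter_upwards [h1, self_mem_nhdsWithin] with r hrt hrI
    exact step r hrI t ht (le_of_lt hrt)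
  have hfin : φ t ≤ φ 0 := ge_of_tendsto htend hev
  have e0 : φ 0 = ∑ i ∈ Finset.range N, |v₀ (i+1) - v₀ i| := by
    apply Finset.sum_congr rfl
    intro i hi
    simp only [Finset.mem_range] at hi
    rw [v_zero_eq hsol hx₀ hv₀0 hv₀N ht' (i+1) (by omega),
      v_zero_eq hsol hx₀ hv₀0 hv₀N ht' i (by omega)]
  rw [← e0]
  exact hfin


/-- **Flux interpolation error.** If `f` is differentiable with `f'` Lipschitz
with constant `[f']_Lip`, then for every `t ∈ (0, tʹ)`:
`∫ |A(x,t) v(x,t) − f(v(x,t))| dx ≤ [f']_Lip v₀* Δx₀* Σᵢ |v₀^{i+1} − v₀^i|`. -/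

theorem flux_interpolation_error
    (f : ℝ → ℝ) (K : ℝ≥0) (hf : LipschitzWith K f)
    (hf0 : f 0 = 0) (hfd : DifferentiableAt ℝ f 0)
    (N : ℕ) (hN : 2 ≤ N) (x₀ v₀ : ℕ → ℝ)
    (hx₀ : ∀ i, 1 ≤ i → i < N → x₀ i < x₀ (i+1))
    (hv₀nn : ∀ i, 1 ≤ i → i < N → 0 ≤ v₀ i)
    (hv₀0 : v₀ 0 = 0) (hv₀N : v₀ N = 0)
    (t' : ℝ) (ht' : 0 < t') (x v : ℕ → ℝ → ℝ)
    (hsol : IsParticleSol f N x₀ v₀ t' x v)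
    (hfdiff : Differentiable ℝ f) (L' : ℝ≥0) (hL' : LipschitzWith L' (deriv f))
    (w : ℝ → ℝ → ℝ)
    (hwl : ∀ t ∈ Set.Ico (0:ℝ) t', ∀ y, y < x 1 t → w y t = 0)
    (hwr : ∀ t ∈ Set.Ico (0:ℝ) t', ∀ y, x N t < y → w y t = 0)
    (hwmid : ∀ t ∈ Set.Ico (0:ℝ) t', ∀ i, 1 ≤ i → i < N →
      ∀ y ∈ Set.Ioo (x i t) (x (i+1) t), w y t = v i t)
    (A : ℝ → ℝ → ℝ)
    (hAl : ∀ t ∈ Set.Ico (0:ℝ) t', ∀ y, y ≤ x 1 t → A y t = pV f 0 (v 1 t))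
    (hAr : ∀ t ∈ Set.Ico (0:ℝ) t', ∀ y, x N t ≤ y → A y t = pV f (v (N-1) t) 0)
    (hAmid : ∀ t ∈ Set.Ico (0:ℝ) t', ∀ i, 1 ≤ i → i < N →
      ∀ y ∈ Set.Icc (x i t) (x (i+1) t),
        A y t = ((x (i+1) t - y) * pV f (v (i-1) t) (v i t)
          + (y - x i t) * pV f (v i t) (v (i+1) t)) / (x (i+1) t - x i t))
    :
    ∀ t ∈ Set.Ioo (0:ℝ) t',
      ∫ y, |A y t * w y t - f (w y t)| ≤
        (L' : ℝ) * vstar N v₀ * maxGap N x₀ *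
          ∑ i ∈ Finset.range N, |v₀ (i+1) - v₀ i| := by
  classical
  intro t ht
  have htI : t ∈ Ico 0 t' := ⟨le_of_lt ht.1, ht.2⟩
  -- strict monotonicity of the positions at time t
  have xmono : ∀ j k, 1 ≤ j → j < k → k ≤ N → x j t < x k t := by
    intro j k h1 hjk hkN
    have : ∀ k, j+1 ≤ k → k ≤ N → x j t < x k t := by
      intro k hk
      induction k, hk using Nat.le_induction with
      | base => intro h; exact hsol.order t ht j h1 (by omega)
      | succ n hn ih =>
        intro hnN
        exact lt_trans (ih (by omega)) (hsol.order t ht n (by omega) (by omega))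
    exact this k hjk hkN
  -- the bad (finite) set
  set E : Set ℝ := (fun i => x i t) '' (Icc 1 N : Set ℕ) with hE
  have hEnull : volume E = 0 := (((Set.finite_Icc 1 N).image _)).measure_zero volume
  -- abbreviations
  set g : ℝ → ℝ := fun y => |A y t * w y t - f (w y t)| with hg
  set h : ℕ → ℝ → ℝ := fun i y =>
    |((x (i+1) t - y) * pV f (v (i-1) t) (v i t)
      + (y - x i t) * pV f (v i t) (v (i+1) t)) / (x (i+1) t - x i t) * v i t - f (v i t)|
    with hh
  set F : ℝ → ℝ := fun y =>
    ∑ i ∈ Finset.Ico 1 N, (Ioo (x i t) (x (i+1) t)).indicator (h i) y with hF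
  have hcont_i : ∀ i : ℕ, Continuous (h i) := by
    intro i
    apply Continuous.abs
    fun_prop
  have hInt_i : ∀ i ∈ Finset.Ico 1 N,
      Integrable ((Ioo (x i t) (x (i+1) t)).indicator (h i)) := by
    intro i hi
    simp only [Finset.mem_Ico] at hi
    have hab : x i t < x (i+1) t := hsol.order t ht i hi.1 hi.2
    refine IntegrableOn.integrable_indicator ?_ measurableSet_Ioo
    exact (intervalIntegrable_iff_integrableOn_Ioo_of_le hab.le).mp
      ((hcont_i i).intervalIntegrable _ _)
  have hFInt : Integrable F := integrable_finset_sum _ hInt_i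
  -- pointwise identification away from E
  have hpt : ∀ y, y ∉ E → g y = F y := by
    intro y hy
    have hne : ∀ i, 1 ≤ i → i ≤ N → y ≠ x i t := by
      intro i hi1 hiN heq
      apply hy
      rw [hE]
      exact ⟨i, ⟨hi1, hiN⟩, heq.symm⟩
    by_cases hyl : y < x 1 t
    · have hw0 : w y t = 0 := hwl t htI y hyl
      have gz : g y = 0 := by simp [hg, hw0, hf0]
      have Fz : F y = 0 := by
        apply Finset.sum_eq_zero
        intro i hi
        simp only [Finset.mem_Ico] at hi
        apply indicator_of_notMem
        intro hmem
        have : x 1 t ≤ x i t := by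
          rcases eq_or_lt_of_le hi.1 with h | h
          · rw [← h]
          · exact le_of_lt (xmono 1 i (le_refl 1) h (by omega))
        linarith [hmem.1]
      rw [gz, Fz]
    by_cases hyr : x N t < y
    · have hw0 : w y t = 0 := hwr t htI y hyr
      have gz : g y = 0 := by simp [hg, hw0, hf0]
      have Fz : F y = 0 := by
        apply Finset.sum_eq_zero
        intro i hi
        simp only [Finset.mem_Ico] at hi
        apply indicator_of_notMem
        intro hmem
        have : x (i+1) t ≤ x N t := by
          rcases eq_or_lt_of_le (by omega : i + 1 ≤ N) with h | h
          · rw [h]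
          · exact le_of_lt (xmono (i+1) N (by omega) h (le_refl N))
        linarith [hmem.2]
      rw [gz, Fz]
    push_neg at hyl hyr
    have hyl' : x 1 t < y := lt_of_le_of_ne hyl (fun hc => hne 1 (le_refl 1) (by omega) hc.symm)
    have hyr' : y < x N t := lt_of_le_of_ne hyr (hne N (by omega) (le_refl N))
    obtain ⟨i, hi1, hiN, hgy1, hgy2⟩ := find_gap hN (fun i => x i t) xmono y hyl' hyr' hne
    have hwv : w y t = v i t := hwmid t htI i hi1 hiN y ⟨hgy1, hgy2⟩
    have hAv : A y t = ((x (i+1) t - y) * pV f (v (i-1) t) (v i t)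
        + (y - x i t) * pV f (v i t) (v (i+1) t)) / (x (i+1) t - x i t) :=
      hAmid t htI i hi1 hiN y ⟨le_of_lt hgy1, le_of_lt hgy2⟩
    have hgy : g y = h i y := by rw [hg, hh]; simp only; rw [hwv, hAv]
    have hFy : F y = h i y := by
      rw [hF]
      simp only
      rw [Finset.sum_eq_single_of_mem i (Finset.mem_Ico.mpr ⟨hi1, hiN⟩)]
      · exact Set.indicator_of_mem (Set.mem_Ioo.mpr ⟨hgy1, hgy2⟩) (h i)
      · intro j hj hji
        simp only [Finset.mem_Ico] at hj
        apply indicator_of_notMem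
        intro hmem
        rcases lt_or_gt_of_ne hji with hlt | hgt
        · have : x (j+1) t ≤ x i t := by
            rcases eq_or_lt_of_le (by omega : j + 1 ≤ i) with h' | h'
            · rw [h']
            · exact le_of_lt (xmono (j+1) i (by omega) h' (by omega))
          linarith [hmem.2]
        · have : x (i+1) t ≤ x j t := by
            rcases eq_or_lt_of_le (by omega : i + 1 ≤ j) with h' | h'
            · rw [h']
            · exact le_of_lt (xmono (i+1) j (by omega) h' (by omega))
          linarith [hmem.1]
    rw [hgy, hFy]
  have hae : g =ᵐ[volume] F := by
    rw [Filter.EventuallyEq, ae_iff]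
    refine measure_mono_null ?_ hEnull
    intro y hy
    by_contra hyE
    exact hy (hpt y hyE)
  -- suprema facts
  have hSv : {r | ∃ i, 1 ≤ i ∧ i ≤ N - 1 ∧ r = v₀ i}.Finite :=
    Set.Finite.subset ((Set.finite_Icc 1 (N-1)).image v₀)
      (by rintro r ⟨i, h1, h2, rfl⟩; exact ⟨i, mem_Icc.mpr ⟨h1, h2⟩, rfl⟩)
  have hSg : {r | ∃ i, 1 ≤ i ∧ i ≤ N - 1 ∧ r = x₀ (i+1) - x₀ i}.Finite :=
    Set.Finite.subset ((Set.finite_Icc 1 (N-1)).image (fun i => x₀ (i+1) - x₀ i))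
      (by rintro r ⟨i, h1, h2, rfl⟩; exact ⟨i, mem_Icc.mpr ⟨h1, h2⟩, rfl⟩)
  have hbddv : BddAbove {r | ∃ i, 1 ≤ i ∧ i ≤ N - 1 ∧ r = v₀ i} := hSv.bddAbove
  have hbddg : BddAbove {r | ∃ i, 1 ≤ i ∧ i ≤ N - 1 ∧ r = x₀ (i+1) - x₀ i} := hSg.bddAbove
  have hvstar0 : 0 ≤ vstar N v₀ :=
    le_trans (hv₀nn 1 le_rfl (by omega)) (le_csSup hbddv ⟨1, le_rfl, by omega, rfl⟩)
  have hMg0 : 0 ≤ maxGap N x₀ :=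
    le_trans (le_of_lt (by linarith [hx₀ 1 le_rfl (by omega)] : (0:ℝ) < x₀ 2 - x₀ 1))
      (le_csSup hbddg ⟨1, le_rfl, by omega, rfl⟩)
  set M : ℝ := vstar N v₀ * maxGap N x₀ with hM
  have hM0 : 0 ≤ M := mul_nonneg hvstar0 hMg0
  set d : ℕ → ℝ := fun j => |v (j+1) t - v j t| with hd
  have hd0 : ∀ j, 0 ≤ d j := fun j => abs_nonneg _
  -- per-interval bound
  have hterm : ∀ i ∈ Finset.Ico 1 N,
      (∫ y, (Ioo (x i t) (x (i+1) t)).indicator (h i) y)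
        ≤ M * (L' : ℝ) / 2 * (d (i-1) + d i) := by
    intro i hi
    simp only [Finset.mem_Ico] at hi
    have hab : x i t < x (i+1) t := hsol.order t ht i hi.1 hi.2
    rw [integral_indicator measurableSet_Ioo, ← integral_Ioc_eq_integral_Ioo,
      ← intervalIntegral.integral_of_le hab.le]
    have hvl : 0 ≤ v (i-1) t := v_nonneg hsol hx₀ hv₀nn (i-1) (by omega) t htI
    have hvm : 0 ≤ v i t := v_nonneg hsol hx₀ hv₀nn i (by omega) t htI
    have hvr : 0 ≤ v (i+1) t := v_nonneg hsol hx₀ hv₀nn (i+1) (by omega) t htI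
    have hbnd := interval_flux_bound (L' := L') hfdiff hL' hf0 (x i t) (x (i+1) t)
      (v (i-1) t) (v i t) (v (i+1) t) hab hvl hvm hvr
    refine le_trans hbnd ?_
    have hmass : v i t * (x (i+1) t - x i t) = v₀ i * (x₀ (i+1) - x₀ i) := by
      rw [hsol.mass i hi.1 hi.2 t htI]
      exact div_mul_cancel₀ _ (ne_of_gt (by linarith : (0:ℝ) < x (i+1) t - x i t))
    have hv₀le : v₀ i ≤ vstar N v₀ := le_csSup hbddv ⟨i, hi.1, by omega, rfl⟩
    have hgle : x₀ (i+1) - x₀ i ≤ maxGap N x₀ := le_csSup hbddg ⟨i, hi.1, by omega, rfl⟩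
    have hmle : v₀ i * (x₀ (i+1) - x₀ i) ≤ M :=
      mul_le_mul hv₀le hgle (le_of_lt (by linarith [hx₀ i hi.1 hi.2])) hvstar0
    have hC0 : 0 ≤ (L' : ℝ) * (|v i t - v (i-1) t| + |v (i+1) t - v i t|) := by positivity
    have e1 : v i t * (x (i+1) t - x i t)
        * ((L' : ℝ) * (|v i t - v (i-1) t| + |v (i+1) t - v i t|)) / 2
        = v₀ i * (x₀ (i+1) - x₀ i)
        * ((L' : ℝ) * (|v i t - v (i-1) t| + |v (i+1) t - v i t|)) / 2 := by
      rw [hmass]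
    rw [e1]
    have e2 : d (i-1) + d i = |v i t - v (i-1) t| + |v (i+1) t - v i t| := by
      simp only [hd]
      rw [show (i-1)+1 = i from by omega]
    rw [e2]
    have := mul_le_mul_of_nonneg_right hmle hC0
    linarith
  calc (∫ y, g y) = ∫ y, F y := integral_congr_ae hae
    _ = ∑ i ∈ Finset.Ico 1 N, ∫ y, (Ioo (x i t) (x (i+1) t)).indicator (h i) y :=
        integral_finset_sum _ hInt_i
    _ ≤ ∑ i ∈ Finset.Ico 1 N, M * (L' : ℝ) / 2 * (d (i-1) + d i) :=
        Finset.sum_le_sum hterm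
    _ = M * (L' : ℝ) / 2 * ∑ i ∈ Finset.Ico 1 N, (d (i-1) + d i) := by
        rw [Finset.mul_sum]
    _ ≤ M * (L' : ℝ) / 2 * (2 * ∑ i ∈ Finset.range N, d i) := by
        apply mul_le_mul_of_nonneg_left (tv_pair_bound hN d hd0) (by positivity)
    _ = M * (L' : ℝ) * ∑ i ∈ Finset.range N, d i := by ring
    _ ≤ M * (L' : ℝ) * ∑ i ∈ Finset.range N, |v₀ (i+1) - v₀ i| := by
        apply mul_le_mul_of_nonneg_left
          (tvd hsol hfdiff hL' hf0 hN hx₀ hv₀nn hv₀0 hv₀N ht' t ht) (by positivity)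
    _ = (L' : ℝ) * vstar N v₀ * maxGap N x₀ * ∑ i ∈ Finset.range N, |v₀ (i+1) - v₀ i| := by
        rw [hM]; ring
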